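/- Let H ≤ GL(d,ℝ) be integrably admissible with essential frequency support 𝒪, let K ⊆ 𝒪 be compact, V ⊆ H a relatively compact unit neighborhood, and (h_i)_{i ∈ I} a V-separated family in H (i.e., the sets h_i V are pairwise disjoint). Then there exists a constant C = C(K,V) > 0 such that for all h ∈ H, the set I_h := {i ∈ I : h^{-T} K ∩ h_i^{-T} K ≠ ∅} has cardinality at most C. -/
import Mathlib


open MeasureTheory Matrix Topology
open scoped Pointwise ENNReal

/-- The dual action of `h ∈ GL(d,ℝ)` on `ξ ∈ ℝ^d`, given by `ξ ↦ hᵀ ξ`. -/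
noncomputable def dualAct {d : ℕ} (h : GL (Fin d) ℝ) (ξ : Fin d → ℝ) : Fin d → ℝ :=
  ((h : Matrix (Fin d) (Fin d) ℝ)ᵀ).mulVec ξ

/-- `((Y,Z)) = {h ∈ H : hᵀ Y ∩ Z ≠ ∅}`. -/
def pairSet {d : ℕ} (H : Subgroup (GL (Fin d) ℝ)) (Y Z : Set (Fin d → ℝ)) :
    Set (GL (Fin d) ℝ) :=
  {h | h ∈ H ∧ ∃ ξ ∈ Y, dualAct h ξ ∈ Z}

/-- `H ≤ GL(d,ℝ)` is integrably admissible with essential frequency support `O`: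
`H` is closed, `O` is open, co-null and `Hᵀ`-invariant, the dual action of `H` on `O`
is proper, and `O = Hᵀ C` for some compact `C ⊆ O`. -/
def IsIntegrablyAdmissible {d : ℕ} (H : Subgroup (GL (Fin d) ℝ))
    (O : Set (Fin d → ℝ)) : Prop :=
  IsClosed (H : Set (GL (Fin d) ℝ)) ∧ IsOpen O ∧ MeasureTheory.volume Oᶜ = 0 ∧
  (∀ h ∈ H, ∀ ξ ∈ O, dualAct h ξ ∈ O) ∧
  (∀ K : Set (Fin d → ℝ), K ⊆ O → IsCompact K →
    IsCompact {p : GL (Fin d) ℝ × (Fin d → ℝ) |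
      p.1 ∈ H ∧ p.2 ∈ O ∧ p.2 ∈ K ∧ dualAct p.1 p.2 ∈ K}) ∧
  ∃ C : Set (Fin d → ℝ), C ⊆ O ∧ IsCompact C ∧ O = ⋃ h ∈ H, dualAct h '' C

lemma dualAct_mul {d : ℕ} (a b : GL (Fin d) ℝ) (ξ : Fin d → ℝ) :
    dualAct a (dualAct b ξ) = dualAct (b * a) ξ := by
  simp [dualAct, Matrix.mulVec_mulVec, Matrix.transpose_mul, Units.val_mul]

lemma dualAct_inv_self {d : ℕ} (a : GL (Fin d) ℝ) (ξ : Fin d → ℝ) :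
    dualAct a (dualAct a⁻¹ ξ) = ξ := by
  rw [dualAct_mul]
  simp [dualAct]

theorem stmt3 {d : ℕ} (H : Subgroup (GL (Fin d) ℝ)) (O : Set (Fin d → ℝ))
    (hadm : IsIntegrablyAdmissible H O)
    (K : Set (Fin d → ℝ)) (hK : IsCompact K) (hKO : K ⊆ O)
    (V : Set (GL (Fin d) ℝ)) (hV : V ∈ 𝓝 (1 : GL (Fin d) ℝ))
    (hVc : IsCompact (closure V))
    {I : Type*} (h : I → GL (Fin d) ℝ) (hhH : ∀ i, h i ∈ H)
    (hsep : Pairwise fun i j => Disjoint ((h i * ·) '' V) ((h j * ·) '' V)) :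
    ∃ C : ℕ, 0 < C ∧ ∀ g ∈ H,
      {i : I | (dualAct g⁻¹ '' K ∩ dualAct (h i)⁻¹ '' K).Nonempty}.Finite ∧
      Nat.card {i : I | (dualAct g⁻¹ '' K ∩ dualAct (h i)⁻¹ '' K).Nonempty} ≤ C := by
  classical
  obtain ⟨-, -, -, -, hproper, -⟩ := hadm
  have hW : IsCompact {p : GL (Fin d) ℝ × (Fin d → ℝ) |
      p.1 ∈ H ∧ p.2 ∈ O ∧ p.2 ∈ K ∧ dualAct p.1 p.2 ∈ K} := hproper K hKO hK
  have hS : IsCompact (Prod.fst '' {p : GL (Fin d) ℝ × (Fin d → ℝ) |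
      p.1 ∈ H ∧ p.2 ∈ O ∧ p.2 ∈ K ∧ dualAct p.1 p.2 ∈ K}) := hW.image continuous_fst
  -- find a small neighborhood U0 of 1 with U0⁻¹ * U0 ⊆ V
  have hcontmap : Continuous fun p : GL (Fin d) ℝ × GL (Fin d) ℝ => p.1⁻¹ * p.2 :=
    (continuous_fst.inv).mul continuous_snd
  have hpre : (fun p : GL (Fin d) ℝ × GL (Fin d) ℝ => p.1⁻¹ * p.2) ⁻¹' V ∈
      𝓝 ((1 : GL (Fin d) ℝ), (1 : GL (Fin d) ℝ)) := by
    apply hcontmap.continuousAt.preimage_mem_nhds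
    simpa using hV
  rw [nhds_prod_eq, Filter.mem_prod_iff] at hpre
  obtain ⟨U1, hU1, U2, hU2, hsub⟩ := hpre
  obtain ⟨U0, hU0sub, hU0open, hU01⟩ := mem_nhds_iff.mp (Filter.inter_mem hU1 hU2)
  have hU0V : ∀ x ∈ U0, ∀ y ∈ U0, x⁻¹ * y ∈ V := by
    intro x hx y hy
    have hxy : (x, y) ∈ U1 ×ˢ U2 := ⟨(hU0sub hx).1, (hU0sub hy).2⟩
    exact hsub hxy
  -- finite subcover of the compact set by translates of U0
  obtain ⟨t, ht⟩ := hS.elim_finite_subcover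
    (fun s : GL (Fin d) ℝ => (fun x => s⁻¹ * x) ⁻¹' U0)
    (fun s => hU0open.preimage (continuous_const.mul continuous_id))
    (fun x _ => Set.mem_iUnion.mpr ⟨x, by simpa using hU01⟩)
  refine ⟨t.card + 1, Nat.succ_pos _, fun g hg => ?_⟩
  set A := {i : I | (dualAct g⁻¹ '' K ∩ dualAct (h i)⁻¹ '' K).Nonempty} with hA
  have hmem : ∀ i ∈ A, ∃ s ∈ t, s⁻¹ * (g⁻¹ * h i) ∈ U0 := by
    intro i hi
    obtain ⟨ζ, ⟨ξ, hξK, hξ⟩, η, hηK, hη⟩ := hi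
    have heq : dualAct g⁻¹ ξ = dualAct (h i)⁻¹ η := by rw [hξ, hη]
    have hin : g⁻¹ * h i ∈ Prod.fst '' {p : GL (Fin d) ℝ × (Fin d → ℝ) |
        p.1 ∈ H ∧ p.2 ∈ O ∧ p.2 ∈ K ∧ dualAct p.1 p.2 ∈ K} := by
      refine ⟨(g⁻¹ * h i, ξ), ⟨H.mul_mem (H.inv_mem hg) (hhH i), hKO hξK, hξK, ?_⟩, rfl⟩
      have : dualAct (g⁻¹ * h i) ξ = η := by
        calc dualAct (g⁻¹ * h i) ξ = dualAct (h i) (dualAct g⁻¹ ξ) :=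
              (dualAct_mul _ _ _).symm
          _ = dualAct (h i) (dualAct (h i)⁻¹ η) := by rw [heq]
          _ = η := dualAct_inv_self _ _
      rw [this]; exact hηK
    have := ht hin
    simpa using this
  choose s hst hsU using hmem
  have hinj : ∀ i (hi : i ∈ A) j (hj : j ∈ A), s i hi = s j hj → i = j := by
    intro i hi j hj hss
    by_contra hne
    have hy : (s i hi)⁻¹ * (g⁻¹ * h j) ∈ U0 := by rw [hss]; exact hsU j hj
    have h1 : ((s i hi)⁻¹ * (g⁻¹ * h i))⁻¹ * ((s i hi)⁻¹ * (g⁻¹ * h j)) ∈ V :=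
      hU0V _ (hsU i hi) _ hy
    have h2 : (h i)⁻¹ * h j ∈ V := by
      have : (h i)⁻¹ * h j =
          ((s i hi)⁻¹ * (g⁻¹ * h i))⁻¹ * ((s i hi)⁻¹ * (g⁻¹ * h j)) := by group
      rw [this]; exact h1
    have hm1 : h j ∈ (h i * ·) '' V := ⟨(h i)⁻¹ * h j, h2, by group⟩
    have hm2 : h j ∈ (h j * ·) '' V := ⟨1, mem_of_mem_nhds hV, mul_one _⟩
    exact Set.disjoint_left.mp (hsep hne) hm1 hm2
  set F : A → {x // x ∈ t} := fun i => ⟨s i.1 i.2, hst i.1 i.2⟩ with hF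
  have hFinj : Function.Injective F := by
    intro a b hab
    exact Subtype.ext (hinj a.1 a.2 b.1 b.2 (congrArg Subtype.val hab))
  have hfinA : Finite A := Finite.of_injective F hFinj
  refine ⟨Set.finite_coe_iff.mp hfinA, ?_⟩
  have hle : Nat.card A ≤ Nat.card {x // x ∈ t} := Nat.card_le_card_of_injective F hFinj
  have : Nat.card {x // x ∈ t} = t.card := by
    rw [Nat.card_eq_fintype_card, Fintype.card_coe]
  omega
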